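/- Jacobi's identity: ∑_{n≥0} q^{n²}/((q)_n)² = 1/(q)_∞ as formal power series, where (q)_n = ∏_{k=1}^n (1−q^k); consequently the 6th-order mock theta function φ₆(q) = ∑_{n≥0} (−1)^n (q;q²)_n q^{n²}/(−q;q)_{2n} satisfies φ₆(q) ≡ 1/(q)_∞ (mod 2), i.e., c_{φ₆}(n) ≡ p(n) (mod 2) where p is the partition function. -/

import Mathlib

open PowerSeries Finset

/-- The infinite product `∏_{n ≥ 1} (1 - q^(m*n))`, i.e. `(q^m)_∞`, as a formal power
series: its `N`-th coefficient equals that of the (stabilized) partial product. -/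
noncomputable def qPochInf (R : Type) [CommRing R] (m : ℕ) : PowerSeries R :=
  PowerSeries.mk fun N =>
    PowerSeries.coeff (R := R) N (∏ n ∈ Finset.Icc 1 N, (1 - PowerSeries.X ^ (m * n)))

/-- The finite q-Pochhammer (q)_n = ∏_{k=1}^n (1 - q^k) over ℤ. -/
noncomputable def qPochFin (n : ℕ) : PowerSeries ℤ :=
  ∏ k ∈ Finset.Icc 1 n, (1 - PowerSeries.X ^ k)

/-- The series ∑_{n≥0} q^(n²)/((q)_n)², defined coefficientwise via the stabilizing
partial sums (the n-th term has lowest degree n²). -/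
noncomputable def jacobiQSum : PowerSeries ℤ :=
  PowerSeries.mk fun N =>
    PowerSeries.coeff (R := ℤ) N (∑ n ∈ Finset.range (N + 1),
      PowerSeries.X ^ (n ^ 2) * (PowerSeries.invOfUnit (qPochFin n) 1) ^ 2)

/-- The 6th order mock theta function
φ₆(q) = ∑_{n≥0} (−1)ⁿ (q;q²)_n q^(n²)/(−q;q)_{2n}, over ZMod 2, defined
coefficientwise via the stabilizing partial sums. -/
noncomputable def phi6 : PowerSeries (ZMod 2) :=
  PowerSeries.mk fun N =>
    PowerSeries.coeff (R := (ZMod 2)) N (∑ n ∈ Finset.range (N + 1),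
      (-1 : PowerSeries (ZMod 2)) ^ n *
        (∏ k ∈ Finset.range n, (1 - PowerSeries.X ^ (2 * k + 1))) *
        PowerSeries.X ^ (n ^ 2) *
        (∏ k ∈ Finset.range (2 * n), (1 + PowerSeries.X ^ (k + 1)))⁻¹)



namespace Phi6Aux

/-! ### Partition counting functions -/

def PA (n N : ℕ) : Finset (Nat.Partition N) :=
  Finset.univ.filter fun p => ∀ x ∈ p.parts, x ≤ n

def PB (n N : ℕ) : Finset (Nat.Partition N) :=
  Finset.univ.filter fun p => p.parts.card ≤ n

def pA (n N : ℕ) : ℕ := (PA n N).card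
def pB (n N : ℕ) : ℕ := (PB n N).card
def pp (N : ℕ) : ℕ := Fintype.card (Nat.Partition N)

lemma card_le_sum_of_pos {s : Multiset ℕ} (h : ∀ x ∈ s, 0 < x) : Multiset.card s ≤ s.sum := by
  have : Multiset.card s • 1 ≤ s.sum := Multiset.card_nsmul_le_sum (fun x hx => h x hx)
  simpa using this

lemma parts_card_le {N : ℕ} (p : Nat.Partition N) : Multiset.card p.parts ≤ N :=
  (card_le_sum_of_pos (fun _ hx => p.parts_pos hx)).trans_eq p.parts_sum

lemma sum_map_sub (s : Multiset ℕ) (n : ℕ) (h : ∀ x ∈ s, n ≤ x) :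
    (s.map (fun x => x - n)).sum + n * Multiset.card s = s.sum := by
  have h1 : s.map (fun x => (x - n) + n) = s.map id :=
    Multiset.map_congr rfl (fun x hx => by have := h x hx; simp only [id_eq]; omega)
  calc (s.map (fun x => x - n)).sum + n * Multiset.card s
      = (s.map (fun x => x - n)).sum + (s.map (fun _ => n)).sum := by
        rw [Multiset.map_const', Multiset.sum_replicate, smul_eq_mul, mul_comm]
    _ = (s.map (fun x => (x - n) + n)).sum := (Multiset.sum_map_add).symm
    _ = s.sum := by rw [h1, Multiset.map_id]

lemma sum_map_add_const (s : Multiset ℕ) (n : ℕ) :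
    (s.map (fun x => x + n)).sum = s.sum + n * Multiset.card s := by
  calc (s.map (fun x => x + n)).sum
      = (s.map (fun x => x)).sum + (s.map (fun _ => n)).sum := (Multiset.sum_map_add)
    _ = s.sum + n * Multiset.card s := by
        rw [Multiset.map_const', Multiset.sum_replicate, smul_eq_mul, mul_comm, Multiset.map_id']

/-! ### base cases -/

lemma pp_zero : pp 0 = 1 := by simp [pp]

lemma pA_zero (N : ℕ) : pA 0 N = if N = 0 then 1 else 0 := by
  rcases eq_or_ne N 0 with rfl | hN
  · rw [if_pos rfl, pA, PA]
    rw [Finset.filter_true_of_mem (fun p _ => by simp)]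
    rw [Finset.card_univ]; exact Fintype.card_unique
  · rw [if_neg hN, pA, PA, Finset.card_eq_zero, Finset.filter_eq_empty_iff]
    intro p _
    intro hall
    apply hN
    rw [← p.parts_sum]
    have : p.parts = 0 := Multiset.eq_zero_of_forall_notMem (fun x hx => by
      have h1 := p.parts_pos hx
      have h2 := hall x hx
      omega)
    rw [this]; rfl

lemma pB_zero (N : ℕ) : pB 0 N = if N = 0 then 1 else 0 := by
  rcases eq_or_ne N 0 with rfl | hN
  · rw [if_pos rfl, pB, PB]
    rw [Finset.filter_true_of_mem (fun p _ => by simp)]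
    rw [Finset.card_univ]; exact Fintype.card_unique
  · rw [if_neg hN, pB, PB, Finset.card_eq_zero, Finset.filter_eq_empty_iff]
    intro p _
    intro hcard
    apply hN
    rw [← p.parts_sum]
    have : p.parts = 0 := Multiset.card_eq_zero.1 (Nat.le_zero.1 hcard)
    rw [this]; rfl

/-! ### recurrences -/

lemma pA_succ (n N : ℕ) :
    pA (n+1) N = pA n N + if n+1 ≤ N then pA (n+1) (N-(n+1)) else 0 := by
  classical
  have hsplit := Finset.card_filter_add_card_filter_not
    (s := PA (n+1) N) (p := fun p => (n+1) ∈ p.parts)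
  have h1 : (PA (n+1) N).filter (fun p => ¬ (n+1) ∈ p.parts) = PA n N := by
    ext p
    simp only [PA, Finset.filter_filter, Finset.mem_filter, Finset.mem_univ, true_and]
    constructor
    · rintro ⟨hle, hnot⟩ x hx
      have h2 := hle x hx
      have h3 : x ≠ n+1 := fun h => hnot (h ▸ hx)
      omega
    · intro h
      refine ⟨fun x hx => (h x hx).trans (by omega), fun hmem => by have := h _ hmem; omega⟩
  have h2 : ((PA (n+1) N).filter (fun p => (n+1) ∈ p.parts)).card
      = if n+1 ≤ N then pA (n+1) (N-(n+1)) else 0 := by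
    split
    · next hle =>
      rw [pA]
      refine Finset.card_bij'
        (fun p hp => ⟨p.parts.erase (n+1),
          fun {i} hi => p.parts_pos (Multiset.mem_of_mem_erase hi), ?_⟩)
        (fun q hq => ⟨(n+1) ::ₘ q.parts,
          fun {i} hi => by
            rcases Multiset.mem_cons.1 hi with rfl | h
            · omega
            · exact q.parts_pos h, ?_⟩)
        ?_ ?_ ?_ ?_
      · -- sum of erased
        have hmem : (n+1) ∈ p.parts := (Finset.mem_filter.1 hp).2
        have hce := Multiset.cons_erase hmem
        have hsum : ((n+1) ::ₘ p.parts.erase (n+1)).sum = N := by rw [hce, p.parts_sum]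
        rw [Multiset.sum_cons] at hsum
        omega
      · rw [Multiset.sum_cons, q.parts_sum]; omega
      · -- hi : image in PA (n+1) (N-(n+1))
        intro p hp
        simp only [PA, Finset.mem_filter, Finset.mem_univ, true_and]
        intro x hx
        have hPA := (Finset.mem_filter.1 ((Finset.mem_filter.1 hp).1)).2
        exact hPA x (Multiset.mem_of_mem_erase hx)
      · -- hj
        intro q hq
        simp only [PA, Finset.mem_filter, Finset.mem_univ, true_and]
        have hPA := (Finset.mem_filter.1 hq).2
        constructor
        · intro x hx
          rcases Multiset.mem_cons.1 hx with rfl | h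
          · rfl
          · exact hPA x h
        · exact Multiset.mem_cons_self _ _
      · intro p hp
        apply Nat.Partition.ext
        exact Multiset.cons_erase ((Finset.mem_filter.1 hp).2)
      · intro q hq
        apply Nat.Partition.ext
        exact Multiset.erase_cons_head _ _
    · next hle =>
      rw [Finset.card_eq_zero, Finset.filter_eq_empty_iff]
      intro p _
      intro hmem
      have : n+1 ≤ p.parts.sum := Multiset.le_sum_of_mem hmem
      rw [p.parts_sum] at this
      omega
  rw [pA, ← hsplit, h1, h2, Nat.add_comm]
  rfl

lemma pB_succ (n N : ℕ) :
    pB (n+1) N = pB n N + if n+1 ≤ N then pB (n+1) (N-(n+1)) else 0 := by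
  classical
  have hsplit := Finset.card_filter_add_card_filter_not
    (s := PB (n+1) N) (p := fun p => Multiset.card p.parts = n+1)
  have h1 : (PB (n+1) N).filter (fun p => ¬ Multiset.card p.parts = n+1) = PB n N := by
    ext p
    simp only [PB, Finset.filter_filter, Finset.mem_filter, Finset.mem_univ, true_and]
    omega
  have h2 : ((PB (n+1) N).filter (fun p => Multiset.card p.parts = n+1)).card
      = if n+1 ≤ N then pB (n+1) (N-(n+1)) else 0 := by
    split
    · next hle =>
      rw [pB]
      -- forward: keep parts ≥ 2, subtract 1 from each
      refine Finset.card_bij'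
        (fun p hp => ⟨(p.parts.filter (fun x => 2 ≤ x)).map (fun x => x - 1),
          fun {i} hi => by
            obtain ⟨y, hy, rfl⟩ := Multiset.mem_map.1 hi
            have := Multiset.of_mem_filter hy
            omega, ?_⟩)
        (fun q hq => ⟨q.parts.map (fun x => x + 1) + Multiset.replicate (n+1 - Multiset.card q.parts) 1,
          fun {i} hi => by
            rcases Multiset.mem_add.1 hi with h | h
            · obtain ⟨y, _, rfl⟩ := Multiset.mem_map.1 h
              omega
            · have := Multiset.eq_of_mem_replicate h
              omega, ?_⟩)
        ?_ ?_ ?_ ?_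
      · -- sum for forward
        have hcard : Multiset.card p.parts = n+1 := (Finset.mem_filter.1 hp).2
        have hdec := Multiset.filter_add_not (fun x => 2 ≤ x) p.parts
        have hones : p.parts.filter (fun x => ¬ 2 ≤ x) =
            Multiset.replicate (Multiset.card (p.parts.filter (fun x => ¬ 2 ≤ x))) 1 := by
          rw [Multiset.eq_replicate_card]
          intro x hx
          have h1 := Multiset.of_mem_filter hx
          have h2 := p.parts_pos (Multiset.mem_filter.1 hx).1
          omega
        have hsum2 : (p.parts.filter (fun x => 2 ≤ x)).sum
            + (p.parts.filter (fun x => ¬ 2 ≤ x)).sum = N := by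
          rw [← Multiset.sum_add, hdec, p.parts_sum]
        have hcard2 : Multiset.card (p.parts.filter (fun x => 2 ≤ x))
            + Multiset.card (p.parts.filter (fun x => ¬ 2 ≤ x)) = n+1 := by
          rw [← Multiset.card_add, hdec, hcard]
        have hsum1 : (p.parts.filter (fun x => ¬ 2 ≤ x)).sum
            = Multiset.card (p.parts.filter (fun x => ¬ 2 ≤ x)) := by
          conv_lhs => rw [hones]
          rw [Multiset.sum_replicate, smul_eq_mul, mul_one]
        have hms := sum_map_sub (p.parts.filter (fun x => 2 ≤ x)) 1
          (fun x hx => by have := Multiset.of_mem_filter hx; omega)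
        omega
      · -- sum for backward
        have hcard : Multiset.card q.parts ≤ n+1 := (Finset.mem_filter.1 hq).2
        rw [Multiset.sum_add, sum_map_add_const, q.parts_sum, Multiset.sum_replicate,
          smul_eq_mul, mul_one]
        have hq1 : Multiset.card q.parts ≤ q.parts.sum := card_le_sum_of_pos (fun _ h => q.parts_pos h)
        rw [q.parts_sum] at hq1
        omega
      · -- hi : membership
        intro p hp
        simp only [PB, Finset.mem_filter, Finset.mem_univ, true_and]
        have hcard : Multiset.card p.parts = n+1 := (Finset.mem_filter.1 hp).2
        rw [Multiset.card_map]
        calc Multiset.card (p.parts.filter (fun x => 2 ≤ x)) ≤ Multiset.card p.parts :=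
              Multiset.card_le_card (Multiset.filter_le _ _)
          _ ≤ n+1 := by omega
      · -- hj : membership
        intro q hq
        simp only [PB, Finset.mem_filter, Finset.mem_univ, true_and]
        have hcard : Multiset.card q.parts ≤ n+1 := (Finset.mem_filter.1 hq).2
        constructor
        · rw [Multiset.card_add, Multiset.card_map, Multiset.card_replicate]; omega
        · rw [Multiset.card_add, Multiset.card_map, Multiset.card_replicate]; omega
      · -- left inverse
        intro p hp
        apply Nat.Partition.ext
        simp only
        have hcard : Multiset.card p.parts = n+1 := (Finset.mem_filter.1 hp).2
        have hmm : ((p.parts.filter (fun x => 2 ≤ x)).map (fun x => x - 1)).map (fun x => x + 1)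
            = p.parts.filter (fun x => 2 ≤ x) := by
          rw [Multiset.map_map]
          rw [Multiset.map_congr rfl (fun x hx => by
            have := Multiset.of_mem_filter hx
            show (x - 1) + 1 = x
            omega)]
          exact Multiset.map_id _
        rw [Multiset.card_map, hmm]
        have hones : p.parts.filter (fun x => ¬ 2 ≤ x) =
            Multiset.replicate (Multiset.card (p.parts.filter (fun x => ¬ 2 ≤ x))) 1 := by
          rw [Multiset.eq_replicate_card]
          intro x hx
          have h1 := Multiset.of_mem_filter hx
          have h2 := p.parts_pos (Multiset.mem_filter.1 hx).1
          omega
        have hcard2 : Multiset.card (p.parts.filter (fun x => 2 ≤ x))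
            + Multiset.card (p.parts.filter (fun x => ¬ 2 ≤ x)) = n+1 := by
          rw [← Multiset.card_add, Multiset.filter_add_not, hcard]
        have : n + 1 - Multiset.card (p.parts.filter (fun x => 2 ≤ x))
            = Multiset.card (p.parts.filter (fun x => ¬ 2 ≤ x)) := by omega
        rw [this, ← hones, Multiset.filter_add_not]
      · -- right inverse
        intro q hq
        apply Nat.Partition.ext
        simp only
        have hfil : (q.parts.map (fun x => x + 1)
              + Multiset.replicate (n+1 - Multiset.card q.parts) 1).filter (fun x => 2 ≤ x)
            = q.parts.map (fun x => x + 1) := by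
          rw [Multiset.filter_add]
          rw [Multiset.filter_eq_self.2 (fun x hx => by
            obtain ⟨y, hy, rfl⟩ := Multiset.mem_map.1 hx
            have := q.parts_pos hy
            omega)]
          rw [Multiset.filter_eq_nil.2 (fun x hx => by
            have := Multiset.eq_of_mem_replicate hx
            omega)]
          rw [add_zero]
        rw [hfil, Multiset.map_map]
        rw [Multiset.map_congr rfl (fun x _ => by show (x + 1) - 1 = x; omega)]
        exact Multiset.map_id _
    · next hle =>
      rw [Finset.card_eq_zero, Finset.filter_eq_empty_iff]
      intro p _
      intro hcard
      have h1 : Multiset.card p.parts ≤ p.parts.sum := card_le_sum_of_pos (fun _ h => p.parts_pos h)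
      rw [p.parts_sum] at h1
      omega
  rw [pB, ← hsplit, h1, h2, Nat.add_comm]
  rfl

lemma pA_eq_pB (n N : ℕ) : pA n N = pB n N := by
  induction n generalizing N with
  | zero => rw [pA_zero, pB_zero]
  | succ n ih =>
    induction N using Nat.strong_induction_on with
    | _ N ihN =>
      rw [pA_succ, pB_succ, ih]
      congr 1
      split
      · next h => exact ihN _ (by omega)
      · rfl

lemma pA_of_le {n N : ℕ} (h : N ≤ n) : pA n N = pp N := by
  rw [pA, PA, pp, ← Finset.card_univ]
  congr 1
  apply Finset.filter_true_of_mem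
  intro p _ x hx
  exact (Multiset.le_sum_of_mem hx).trans (p.parts_sum.le.trans h)

end Phi6Aux

namespace Phi6Aux

/-! ### Durfee square decomposition -/

def cge (s : Multiset ℕ) (i : ℕ) : ℕ := Multiset.card (s.filter (fun x => i ≤ x))

lemma cge_anti (s : Multiset ℕ) {i j : ℕ} (h : i ≤ j) : cge s j ≤ cge s i :=
  Multiset.card_le_card (Multiset.monotone_filter_right s (fun x hx => le_trans h hx))

lemma cge_le_card (s : Multiset ℕ) (i : ℕ) : cge s i ≤ Multiset.card s :=
  Multiset.card_le_card (Multiset.filter_le _ _)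

lemma cge_succ (s : Multiset ℕ) (n : ℕ) :
    cge s (n+1) = Multiset.card (s.filter (fun x => n < x)) := by
  rw [cge]
  congr 1

lemma cge_split (s : Multiset ℕ) (n : ℕ) : cge s n = cge s (n+1) + s.count n := by
  classical
  have h := Multiset.filter_add_not (fun x => n+1 ≤ x) (s.filter (fun x => n ≤ x))
  have h1 : (s.filter (fun x => n ≤ x)).filter (fun x => n+1 ≤ x)
      = s.filter (fun x => n+1 ≤ x) := by
    rw [Multiset.filter_filter]
    apply Multiset.filter_congr
    intro x _
    omega
  have h2 : (s.filter (fun x => n ≤ x)).filter (fun x => ¬ n+1 ≤ x)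
      = s.filter (fun x => x = n) := by
    rw [Multiset.filter_filter]
    apply Multiset.filter_congr
    intro x _
    omega
  have h3 : Multiset.card (s.filter (fun x => x = n)) = s.count n := by
    rw [Multiset.count_eq_card_filter_eq]
    congr 1
    apply Multiset.filter_congr
    intro x _
    exact eq_comm
  have hcard := congrArg Multiset.card h
  rw [Multiset.card_add, h1, h2, h3] at hcard
  rw [cge, cge, ← hcard]

lemma nl (n t : ℕ) (h : t ≤ n) : n * t + (n - t) * n = n ^ 2 := by
  obtain ⟨k, hk⟩ := Nat.le.dest h
  rw [← hk, Nat.add_sub_cancel_left]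
  ring

def durfee {N : ℕ} (p : Nat.Partition N) : ℕ :=
  Nat.findGreatest (fun i => i ≤ cge p.parts i) N

lemma durfee_le {N : ℕ} (p : Nat.Partition N) : durfee p ≤ N := Nat.findGreatest_le N

lemma durfee_spec {N : ℕ} (p : Nat.Partition N) : durfee p ≤ cge p.parts (durfee p) := by
  have h := (Nat.findGreatest_eq_iff (P := fun i => i ≤ cge p.parts i)
    (k := N) (m := durfee p)).1 rfl
  rcases Nat.eq_zero_or_pos (durfee p) with h0 | h0
  · omega
  · exact h.2.1 (by omega)

lemma durfee_succ_bound {N : ℕ} (p : Nat.Partition N) :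
    cge p.parts (durfee p + 1) ≤ durfee p := by
  by_contra hcon
  push_neg at hcon
  have h1 : durfee p + 1 ≤ cge p.parts (durfee p + 1) := hcon
  have h2 : durfee p + 1 ≤ N := h1.trans ((cge_le_card _ _).trans (parts_card_le p))
  have h := (Nat.findGreatest_eq_iff (P := fun i => i ≤ cge p.parts i)
    (k := N) (m := durfee p)).1 rfl
  exact h.2.2 (lt_add_one _) h2 h1

lemma durfee_eq_of {N : ℕ} (p : Nat.Partition N) (n : ℕ)
    (h1 : n ≤ cge p.parts n) (h2 : cge p.parts (n+1) ≤ n) : durfee p = n := by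
  have hN : n ≤ N := h1.trans ((cge_le_card _ _).trans (parts_card_le p))
  rw [durfee, Nat.findGreatest_eq_iff]
  refine ⟨hN, fun _ => h1, ?_⟩
  intro m hm hmN hP
  have h3 : cge p.parts m ≤ cge p.parts (n+1) := cge_anti _ (by omega)
  omega

def alphaM (n : ℕ) (s : Multiset ℕ) : Multiset ℕ :=
  (s.filter (fun x => n < x)).map (fun x => x - n)

def betaM (n : ℕ) (s : Multiset ℕ) : Multiset ℕ :=
  s.filter (fun x => x ≤ n)
    - Multiset.replicate (n - Multiset.card (s.filter (fun x => n < x))) n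

lemma filter_not_lt (s : Multiset ℕ) (n : ℕ) :
    s.filter (fun x => ¬ n < x) = s.filter (fun x => x ≤ n) := by
  apply Multiset.filter_congr
  intro x _
  omega

lemma replicate_le_filter {s : Multiset ℕ} {n : ℕ} (h1 : n ≤ cge s n) :
    Multiset.replicate (n - Multiset.card (s.filter (fun x => n < x))) n
      ≤ s.filter (fun x => x ≤ n) := by
  rw [← Multiset.le_count_iff_replicate_le]
  rw [Multiset.count_filter_of_pos (p := fun x => x ≤ n) (le_refl n)]
  have hs := cge_split s n
  have hsucc := cge_succ s n
  omega

lemma durfee_decomp {N : ℕ} (p : Nat.Partition N) {n : ℕ} (hd : durfee p = n) :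
    (alphaM n p.parts).sum + (betaM n p.parts).sum + n^2 = N := by
  classical
  have hspec : n ≤ cge p.parts n := by rw [← hd]; exact durfee_spec p
  have hbound : cge p.parts (n+1) ≤ n := by rw [← hd]; exact durfee_succ_bound p
  have htc : Multiset.card (p.parts.filter (fun x => n < x)) = cge p.parts (n+1) :=
    (cge_succ p.parts n).symm
  have hGT : (alphaM n p.parts).sum + n * Multiset.card (p.parts.filter (fun x => n < x))
      = (p.parts.filter (fun x => n < x)).sum := by
    rw [alphaM]
    exact sum_map_sub _ n (fun x hx => by have := Multiset.of_mem_filter hx; omega)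
  have hrep := replicate_le_filter (s := p.parts) hspec
  have hLE : (betaM n p.parts).sum
      + (n - Multiset.card (p.parts.filter (fun x => n < x))) * n
      = (p.parts.filter (fun x => x ≤ n)).sum := by
    have h := tsub_add_cancel_of_le hrep
    have hsum := congrArg Multiset.sum h
    rw [Multiset.sum_add, Multiset.sum_replicate, smul_eq_mul] at hsum
    rw [betaM]
    exact hsum
  have hsplit : (p.parts.filter (fun x => n < x)).sum
      + (p.parts.filter (fun x => x ≤ n)).sum = N := by
    rw [← filter_not_lt, ← Multiset.sum_add, Multiset.filter_add_not]
    exact p.parts_sum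
  have hnl := nl n (Multiset.card (p.parts.filter (fun x => n < x))) (by omega)
  calc (alphaM n p.parts).sum + (betaM n p.parts).sum + n^2
      = (alphaM n p.parts).sum + (betaM n p.parts).sum
        + (n * Multiset.card (p.parts.filter (fun x => n < x))
          + (n - Multiset.card (p.parts.filter (fun x => n < x))) * n) := by rw [hnl]
    _ = ((alphaM n p.parts).sum + n * Multiset.card (p.parts.filter (fun x => n < x)))
        + ((betaM n p.parts).sum
          + (n - Multiset.card (p.parts.filter (fun x => n < x))) * n) := by ring
    _ = (p.parts.filter (fun x => n < x)).sum + (p.parts.filter (fun x => x ≤ n)).sum := by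
        rw [hGT, hLE]
    _ = N := hsplit

lemma alpha_card_le {N : ℕ} (p : Nat.Partition N) {n : ℕ} (hd : durfee p = n) :
    Multiset.card (alphaM n p.parts) ≤ n := by
  rw [alphaM, Multiset.card_map, ← cge_succ, ← hd]
  exact durfee_succ_bound p

end Phi6Aux

namespace Phi6Aux

section Backward

variable (n : ℕ) (q1 q2 : Multiset ℕ)

/-- the reassembled partition multiset -/
def mkM : Multiset ℕ :=
  q1.map (fun x => x + n) + Multiset.replicate (n - Multiset.card q1) n + q2

lemma mkM_filter_gt (hq1 : ∀ x ∈ q1, 0 < x) (hq2 : ∀ x ∈ q2, x ≤ n) :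
    (mkM n q1 q2).filter (fun x => n < x) = q1.map (fun x => x + n) := by
  rw [mkM, Multiset.filter_add, Multiset.filter_add]
  rw [Multiset.filter_eq_self.2 (fun x hx => by
    obtain ⟨y, hy, rfl⟩ := Multiset.mem_map.1 hx
    have := hq1 y hy
    omega)]
  rw [Multiset.filter_eq_nil.2 (fun x hx => by
    have := Multiset.eq_of_mem_replicate hx
    omega)]
  rw [Multiset.filter_eq_nil.2 (fun x hx => by
    have := hq2 x hx
    omega)]
  rw [add_zero, add_zero]

lemma mkM_filter_le (hq1 : ∀ x ∈ q1, 0 < x) (hq2 : ∀ x ∈ q2, x ≤ n) :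
    (mkM n q1 q2).filter (fun x => x ≤ n)
      = Multiset.replicate (n - Multiset.card q1) n + q2 := by
  rw [mkM, Multiset.filter_add, Multiset.filter_add]
  rw [Multiset.filter_eq_nil.2 (fun x hx => by
    obtain ⟨y, hy, rfl⟩ := Multiset.mem_map.1 hx
    have := hq1 y hy
    omega)]
  rw [Multiset.filter_eq_self.2 (fun x hx => by
    have := Multiset.eq_of_mem_replicate hx
    omega)]
  rw [Multiset.filter_eq_self.2 (fun x hx => hq2 x hx)]
  rw [zero_add]

lemma mkM_alpha (hq1 : ∀ x ∈ q1, 0 < x) (hq2 : ∀ x ∈ q2, x ≤ n) :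
    alphaM n (mkM n q1 q2) = q1 := by
  rw [alphaM, mkM_filter_gt n q1 q2 hq1 hq2, Multiset.map_map]
  rw [Multiset.map_congr rfl (fun x _ => by show (x + n) - n = x; omega)]
  exact Multiset.map_id _

lemma mkM_beta (hq1 : ∀ x ∈ q1, 0 < x) (hq2 : ∀ x ∈ q2, x ≤ n) :
    betaM n (mkM n q1 q2) = q2 := by
  rw [betaM, mkM_filter_le n q1 q2 hq1 hq2, mkM_filter_gt n q1 q2 hq1 hq2,
    Multiset.card_map]
  exact add_tsub_cancel_left _ _

lemma mkM_cge_lower (hq1 : ∀ x ∈ q1, 0 < x) (hc : Multiset.card q1 ≤ n) :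
    n ≤ cge (mkM n q1 q2) n := by
  rw [cge, mkM, Multiset.filter_add, Multiset.filter_add]
  rw [Multiset.filter_eq_self.2 (fun x hx => by
    obtain ⟨y, hy, rfl⟩ := Multiset.mem_map.1 hx
    omega)]
  rw [Multiset.filter_eq_self.2 (fun x hx => by
    have := Multiset.eq_of_mem_replicate hx
    omega)]
  rw [Multiset.card_add, Multiset.card_add, Multiset.card_map, Multiset.card_replicate]
  omega

lemma mkM_cge_upper (hq1 : ∀ x ∈ q1, 0 < x) (hq2 : ∀ x ∈ q2, x ≤ n) :
    cge (mkM n q1 q2) (n+1) = Multiset.card q1 := by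
  rw [cge_succ, mkM_filter_gt n q1 q2 hq1 hq2, Multiset.card_map]

lemma mkM_sum (hc : Multiset.card q1 ≤ n) :
    (mkM n q1 q2).sum = q1.sum + q2.sum + n^2 := by
  rw [mkM, Multiset.sum_add, Multiset.sum_add, sum_map_add_const,
    Multiset.sum_replicate, smul_eq_mul]
  have := nl n (Multiset.card q1) hc
  omega

end Backward

lemma fiber_card (N n a : ℕ) (ha : n^2 + a ≤ N) :
    (Finset.univ.filter (fun p : Nat.Partition N =>
        durfee p = n ∧ (alphaM n p.parts).sum = a)).card
      = pB n a * pA n (N - n^2 - a) := by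
  classical
  rw [pB, pA, ← Finset.card_product]
  refine Finset.card_bij'
    (fun p hp =>
      (⟨alphaM n p.parts,
        fun {i} hi => by
          obtain ⟨y, hy, rfl⟩ := Multiset.mem_map.1 hi
          have := Multiset.of_mem_filter hy
          omega,
        by
          exact ((Finset.mem_filter.1 hp).2).2⟩,
       ⟨betaM n p.parts,
        fun {i} hi => by
          have h1 : i ∈ p.parts.filter (fun x => x ≤ n) :=
            Multiset.mem_of_le tsub_le_self hi
          exact p.parts_pos (Multiset.mem_filter.1 h1).1,
        by
          have h := (Finset.mem_filter.1 hp).2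
          have hdec := durfee_decomp p h.1
          omega⟩))
    (fun q hq =>
      ⟨mkM n q.1.parts q.2.parts,
       fun {i} hi => by
         rcases Multiset.mem_add.1 hi with h | h
         · rcases Multiset.mem_add.1 h with h' | h'
           · obtain ⟨y, hy, rfl⟩ := Multiset.mem_map.1 h'
             have := q.1.parts_pos hy
             omega
           · obtain ⟨hk, rfl⟩ := Multiset.mem_replicate.1 h'
             omega
         · exact q.2.parts_pos h,
       by
         have hq' := Finset.mem_product.1 hq
         have hc : Multiset.card q.1.parts ≤ n := (Finset.mem_filter.1 hq'.1).2
         rw [mkM_sum n _ _ hc, q.1.parts_sum, q.2.parts_sum]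
         omega⟩)
    ?_ ?_ ?_ ?_
  · -- forward membership
    intro p hp
    rw [Finset.mem_product]
    have h := (Finset.mem_filter.1 hp).2
    constructor
    · simp only [PB, Finset.mem_filter]
      exact ⟨Finset.mem_univ _, alpha_card_le p h.1⟩
    · simp only [PA, Finset.mem_filter]
      refine ⟨Finset.mem_univ _, ?_⟩
      intro x hx
      have h1 : x ∈ p.parts.filter (fun y => y ≤ n) :=
        Multiset.mem_of_le tsub_le_self hx
      exact (Multiset.mem_filter.1 h1).2
  · -- backward membership
    intro q hq
    have hq' := Finset.mem_product.1 hq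
    have hc : Multiset.card q.1.parts ≤ n := (Finset.mem_filter.1 hq'.1).2
    have hq1 : ∀ x ∈ q.1.parts, 0 < x := fun x hx => q.1.parts_pos hx
    have hq2 : ∀ x ∈ q.2.parts, x ≤ n := fun x hx => (Finset.mem_filter.1 hq'.2).2 x hx
    rw [Finset.mem_filter]
    refine ⟨Finset.mem_univ _, ?_, ?_⟩
    · exact durfee_eq_of _ n (mkM_cge_lower n _ q.2.parts hq1 hc)
        (le_of_eq_of_le (mkM_cge_upper n _ _ hq1 hq2) hc)
    · rw [mkM_alpha n _ _ hq1 hq2]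
      exact q.1.parts_sum
  · -- left inverse
    intro p hp
    have h := (Finset.mem_filter.1 hp).2
    have hspec : n ≤ cge p.parts n := by rw [← h.1]; exact durfee_spec p
    apply Nat.Partition.ext
    show mkM n (alphaM n p.parts) (betaM n p.parts) = p.parts
    rw [mkM]
    have hmap : (alphaM n p.parts).map (fun x => x + n)
        = p.parts.filter (fun x => n < x) := by
      rw [alphaM, Multiset.map_map]
      rw [Multiset.map_congr rfl (fun x hx => by
        have := Multiset.of_mem_filter hx
        show (x - n) + n = x
        omega)]
      exact Multiset.map_id _
    have hcard : Multiset.card (alphaM n p.parts)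
        = Multiset.card (p.parts.filter (fun x => n < x)) := by
      rw [alphaM, Multiset.card_map]
    rw [hmap, hcard, betaM, add_assoc]
    rw [add_tsub_cancel_of_le (replicate_le_filter hspec)]
    rw [← filter_not_lt p.parts n, Multiset.filter_add_not]
  · -- right inverse
    intro q hq
    have hq' := Finset.mem_product.1 hq
    have hq1 : ∀ x ∈ q.1.parts, 0 < x := fun x hx => q.1.parts_pos hx
    have hq2 : ∀ x ∈ q.2.parts, x ≤ n := fun x hx => (Finset.mem_filter.1 hq'.2).2 x hx
    have e1 := mkM_alpha n q.1.parts q.2.parts hq1 hq2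
    have e2 := mkM_beta n q.1.parts q.2.parts hq1 hq2
    exact Prod.ext (Nat.Partition.ext e1) (Nat.Partition.ext e2)

lemma durfee_identity (N : ℕ) :
    pp N = ∑ n ∈ Finset.range (N+1),
      if n^2 ≤ N then
        ∑ ab ∈ Finset.HasAntidiagonal.antidiagonal (N - n^2), pA n ab.1 * pA n ab.2
      else 0 := by
  classical
  rw [pp, ← Finset.card_univ]
  rw [Finset.card_eq_sum_card_fiberwise
    (f := fun p : Nat.Partition N => durfee p) (t := Finset.range (N+1))
    (fun p _ => Finset.mem_range.2 (Nat.lt_succ_of_le (durfee_le p)))]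
  refine Finset.sum_congr rfl ?_
  intro n _
  by_cases hn : n^2 ≤ N
  · rw [if_pos hn]
    rw [Finset.card_eq_sum_card_fiberwise
      (f := fun p : Nat.Partition N => (alphaM n p.parts).sum)
      (t := Finset.range (N - n^2 + 1))
      (fun p hp => Finset.mem_range.2 (by
        have hd := (Finset.mem_filter.1 hp).2
        have := durfee_decomp p hd
        dsimp only
        omega))]
    rw [Finset.Nat.sum_antidiagonal_eq_sum_range_succ_mk]
    refine Finset.sum_congr rfl ?_
    intro a ha
    rw [Finset.filter_filter]
    have haN : n^2 + a ≤ N := by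
      have := Finset.mem_range.1 ha
      omega
    rw [fiber_card N n a haN, ← pA_eq_pB]
  · rw [if_neg hn]
    rw [Finset.card_eq_zero, Finset.filter_eq_empty_iff]
    intro p _ hd
    exact hn (by have := durfee_decomp p hd; omega)

end Phi6Aux

namespace Phi6Aux

/-! ### Power series side -/

noncomputable def pochR (R : Type) [CommRing R] (n : ℕ) : PowerSeries R :=
  ∏ k ∈ Finset.Icc 1 n, (1 - PowerSeries.X ^ k)

lemma qPochFin_eq (n : ℕ) : qPochFin n = pochR ℤ n := rfl

lemma pochR_zero (R : Type) [CommRing R] : pochR R 0 = 1 := by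
  rw [pochR, Finset.Icc_eq_empty (by omega), Finset.prod_empty]

lemma pochR_succ (R : Type) [CommRing R] (n : ℕ) :
    pochR R (n+1) = pochR R n * ((1 : PowerSeries R) - X ^ (n+1)) := by
  rw [pochR, pochR, Finset.prod_Icc_succ_top (by omega)]

lemma constantCoeff_pochR (R : Type) [CommRing R] (n : ℕ) :
    PowerSeries.constantCoeff (R := R) (pochR R n) = 1 := by
  rw [pochR, map_prod]
  apply Finset.prod_eq_one
  intro k hk
  have hk1 : 1 ≤ k := (Finset.mem_Icc.1 hk).1
  rw [map_sub, map_one, map_pow, PowerSeries.constantCoeff_X, zero_pow (by omega), sub_zero]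

noncomputable def mkA (R : Type) [CommRing R] (n : ℕ) : PowerSeries R :=
  PowerSeries.mk fun m => (pA n m : R)

lemma coeff_mkA (R : Type) [CommRing R] (n m : ℕ) :
    PowerSeries.coeff (R := R) m (mkA R n) = (pA n m : R) := by
  rw [mkA, PowerSeries.coeff_mk]

lemma pochR_mul_mkA (R : Type) [CommRing R] (n : ℕ) : pochR R n * mkA R n = 1 := by
  induction n with
  | zero =>
    rw [pochR_zero, one_mul]
    ext N
    rw [coeff_mkA, PowerSeries.coeff_one, pA_zero]
    split
    · exact Nat.cast_one
    · exact Nat.cast_zero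
  | succ n ih =>
    have key : ((1 : PowerSeries R) - X ^ (n+1)) * mkA R (n+1) = mkA R n := by
      ext N
      rw [sub_mul, one_mul, map_sub, PowerSeries.coeff_X_pow_mul']
      simp only [coeff_mkA]
      split
      · next h =>
        rw [pA_succ n N, if_pos h]
        push_cast
        ring
      · next h =>
        rw [pA_succ n N, if_neg h]
        push_cast
        ring
    rw [pochR_succ, mul_assoc, key, ih]

lemma invOfUnit_unique {R : Type} [CommRing R] {f g : PowerSeries R}
    (h0 : PowerSeries.constantCoeff (R := R) f = 1) (h : f * g = 1) :
    PowerSeries.invOfUnit f 1 = g := by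
  have h1 : f * PowerSeries.invOfUnit f 1 = 1 :=
    PowerSeries.mul_invOfUnit f 1 (by rw [h0, Units.val_one])
  calc PowerSeries.invOfUnit f 1 = PowerSeries.invOfUnit f 1 * (f * g) := by rw [h, mul_one]
    _ = (f * PowerSeries.invOfUnit f 1) * g := by ring
    _ = g := by rw [h1, one_mul]

lemma coeff_pochR_stable (R : Type) [CommRing R] {i M : ℕ} (h : i ≤ M) :
    PowerSeries.coeff (R := R) i (pochR R M) = PowerSeries.coeff (R := R) i (pochR R i) := by
  induction M with
  | zero =>
    have : i = 0 := by omega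
    subst this
    rfl
  | succ M ih =>
    rcases eq_or_lt_of_le h with h' | h'
    · subst h'
      rfl
    · have hi : i ≤ M := by omega
      rw [pochR_succ, mul_sub, mul_one, map_sub, PowerSeries.coeff_mul_X_pow',
        if_neg (by omega), sub_zero]
      exact ih hi

lemma coeff_qPochInf (R : Type) [CommRing R] {i N : ℕ} (h : i ≤ N) :
    PowerSeries.coeff (R := R) i (qPochInf R 1) = PowerSeries.coeff (R := R) i (pochR R N) := by
  rw [qPochInf, PowerSeries.coeff_mk]
  have h1 : (∏ n ∈ Finset.Icc 1 i, (1 - PowerSeries.X ^ (1 * n)) : PowerSeries R)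
      = pochR R i := by
    rw [pochR]
    apply Finset.prod_congr rfl
    intro k _
    rw [one_mul]
  rw [h1]
  exact (coeff_pochR_stable R h).symm

lemma constantCoeff_qPochInf (R : Type) [CommRing R] :
    PowerSeries.constantCoeff (R := R) (qPochInf R 1) = 1 := by
  rw [← PowerSeries.coeff_zero_eq_constantCoeff_apply]
  rw [coeff_qPochInf R (le_refl 0), pochR_zero]
  simp [PowerSeries.coeff_one]

noncomputable def Pser (R : Type) [CommRing R] : PowerSeries R :=
  PowerSeries.mk fun m => (pp m : R)

lemma qPochInf_mul_Pser (R : Type) [CommRing R] : qPochInf R 1 * Pser R = 1 := by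
  ext N
  rw [PowerSeries.coeff_mul]
  have hcong : ∀ ab ∈ Finset.HasAntidiagonal.antidiagonal N,
      PowerSeries.coeff (R := R) ab.1 (qPochInf R 1) * PowerSeries.coeff (R := R) ab.2 (Pser R)
      = PowerSeries.coeff (R := R) ab.1 (pochR R N) * PowerSeries.coeff (R := R) ab.2 (mkA R N) := by
    intro ab hab
    have hsum := Finset.HasAntidiagonal.mem_antidiagonal.1 hab
    rw [coeff_qPochInf R (show ab.1 ≤ N by omega)]
    congr 1
    have e1 : PowerSeries.coeff (R := R) ab.2 (Pser R) = (pp ab.2 : R) := PowerSeries.coeff_mk _ _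
    rw [e1, coeff_mkA, pA_of_le (show ab.2 ≤ N by omega)]
  rw [Finset.sum_congr rfl hcong, ← PowerSeries.coeff_mul, pochR_mul_mkA]

lemma coeff_jacobi_sum (R : Type) [CommRing R] (N : ℕ) :
    PowerSeries.coeff (R := R) N (∑ n ∈ Finset.range (N+1),
      PowerSeries.X ^ (n ^ 2) * (mkA R n) ^ 2) = (pp N : R) := by
  rw [map_sum]
  have hterm : ∀ n ∈ Finset.range (N+1),
      PowerSeries.coeff (R := R) N (PowerSeries.X ^ (n ^ 2) * (mkA R n) ^ 2)
      = if n^2 ≤ N then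
          ((∑ ab ∈ Finset.HasAntidiagonal.antidiagonal (N - n^2), pA n ab.1 * pA n ab.2 : ℕ) : R)
        else 0 := by
    intro n _
    rw [PowerSeries.coeff_X_pow_mul']
    split
    · rw [pow_two (mkA R n), PowerSeries.coeff_mul]
      push_cast
      refine Finset.sum_congr rfl ?_
      intro ab _
      rw [coeff_mkA, coeff_mkA]
    · rfl
  rw [Finset.sum_congr rfl hterm, durfee_identity N, Nat.cast_sum]
  refine Finset.sum_congr rfl ?_
  intro n _
  rw [apply_ite (Nat.cast : ℕ → R), Nat.cast_zero]

lemma invOfUnit_qPochFin (n : ℕ) :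
    PowerSeries.invOfUnit (qPochFin n) 1 = mkA ℤ n :=
  invOfUnit_unique (by rw [qPochFin_eq]; exact constantCoeff_pochR ℤ n)
    (by rw [qPochFin_eq]; exact pochR_mul_mkA ℤ n)

lemma part1 : jacobiQSum = PowerSeries.invOfUnit (qPochInf ℤ 1) 1 := by
  have hPser : PowerSeries.invOfUnit (qPochInf ℤ 1) 1 = Pser ℤ :=
    invOfUnit_unique (constantCoeff_qPochInf ℤ) (qPochInf_mul_Pser ℤ)
  rw [hPser]
  ext N
  have e1 : PowerSeries.coeff (R := ℤ) N jacobiQSum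
      = PowerSeries.coeff (R := ℤ) N (∑ n ∈ Finset.range (N+1),
          PowerSeries.X ^ (n ^ 2) * (PowerSeries.invOfUnit (qPochFin n) 1) ^ 2) :=
    PowerSeries.coeff_mk _ _
  have e2 : PowerSeries.coeff (R := ℤ) N (Pser ℤ) = (pp N : ℤ) := PowerSeries.coeff_mk _ _
  rw [e1, e2]
  simp_rw [invOfUnit_qPochFin]
  exact coeff_jacobi_sum ℤ N

end Phi6Aux

namespace Phi6Aux

/-! ### mod 2 -/

lemma ps_neg_eq (f : PowerSeries (ZMod 2)) : -f = f := by
  ext n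
  rw [map_neg]
  exact CharTwo.neg_eq _

lemma one_add_pow (j : ℕ) :
    (1 + PowerSeries.X ^ j : PowerSeries (ZMod 2)) = 1 - PowerSeries.X ^ j := by
  rw [sub_eq_add_neg, ps_neg_eq]

lemma ps_add_self (f : PowerSeries (ZMod 2)) : f + f = 0 := by
  nth_rewrite 2 [← ps_neg_eq f]
  exact add_neg_cancel f

lemma sq_one_sub (k : ℕ) :
    ((1 - PowerSeries.X ^ k) ^ 2 : PowerSeries (ZMod 2)) = 1 - PowerSeries.X ^ (2 * k) := by
  have h : ((1 - PowerSeries.X ^ k) ^ 2 : PowerSeries (ZMod 2))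
      = 1 - (PowerSeries.X ^ k + PowerSeries.X ^ k)
        + PowerSeries.X ^ k * PowerSeries.X ^ k := by ring
  rw [h, ps_add_self, sub_zero, ← pow_add]
  have h2 : k + k = 2 * k := by omega
  rw [h2]
  exact one_add_pow _

noncomputable def Podd (n : ℕ) : PowerSeries (ZMod 2) :=
  ∏ k ∈ Finset.range n, (1 - PowerSeries.X ^ (2 * k + 1))

lemma Podd_succ (n : ℕ) :
    Podd (n+1) = Podd n * (1 - PowerSeries.X ^ (2 * n + 1)) := by
  rw [Podd, Podd, Finset.prod_range_succ]

lemma poch_split (n : ℕ) :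
    pochR (ZMod 2) (2 * n)
      = Podd n * ∏ k ∈ Finset.range n, (1 - PowerSeries.X ^ (2 * k + 2)) := by
  induction n with
  | zero =>
    have h0 : 2 * 0 = 0 := rfl
    rw [h0, pochR_zero, Podd]
    simp
  | succ n ih =>
    have h1 : 2 * (n+1) = (2*n+1)+1 := by omega
    rw [h1, pochR_succ, pochR_succ, ih, Podd_succ, Finset.prod_range_succ]
    have h2 : (2*n+1)+1 = 2*n+2 := by omega
    rw [h2]
    ring

lemma even_prod (n : ℕ) :
    (∏ k ∈ Finset.range n, (1 - PowerSeries.X ^ (2 * k + 2) : PowerSeries (ZMod 2)))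
      = (pochR (ZMod 2) n) ^ 2 := by
  induction n with
  | zero => simp [pochR_zero]
  | succ n ih =>
    rw [Finset.prod_range_succ, ih, pochR_succ, mul_pow, sq_one_sub (n+1)]
    have h : 2*(n+1) = 2*n+2 := by omega
    rw [h]

lemma plus_prod (m : ℕ) :
    (∏ k ∈ Finset.range m, (1 + PowerSeries.X ^ (k + 1) : PowerSeries (ZMod 2)))
      = pochR (ZMod 2) m := by
  induction m with
  | zero => simp [pochR_zero]
  | succ m ih => rw [Finset.prod_range_succ, ih, one_add_pow, pochR_succ]

lemma constantCoeff_Podd (n : ℕ) :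
    PowerSeries.constantCoeff (R := (ZMod 2)) (Podd n) = 1 := by
  rw [Podd, map_prod]
  apply Finset.prod_eq_one
  intro k _
  rw [map_sub, map_one, map_pow, PowerSeries.constantCoeff_X, zero_pow (by omega), sub_zero]

lemma inv_pochK (n : ℕ) : (pochR (ZMod 2) n)⁻¹ = mkA (ZMod 2) n := by
  rw [PowerSeries.inv_eq_iff_mul_eq_one (by
    rw [constantCoeff_pochR]; exact one_ne_zero)]
  rw [mul_comm]
  exact pochR_mul_mkA _ n

lemma term_eq (n : ℕ) :
    (-1 : PowerSeries (ZMod 2)) ^ n *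
        (∏ k ∈ Finset.range n, (1 - PowerSeries.X ^ (2 * k + 1))) *
        PowerSeries.X ^ (n ^ 2) *
        (∏ k ∈ Finset.range (2 * n), (1 + PowerSeries.X ^ (k + 1)))⁻¹
      = PowerSeries.X ^ (n ^ 2) * (mkA (ZMod 2) n) ^ 2 := by
  have hm1 : (-1 : PowerSeries (ZMod 2)) = 1 := ps_neg_eq 1
  rw [hm1, one_pow, one_mul, plus_prod (2*n), poch_split n, even_prod n]
  have hre : (∏ k ∈ Finset.range n, (1 - PowerSeries.X ^ (2 * k + 1) : PowerSeries (ZMod 2)))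
      = Podd n := rfl
  rw [hre, PowerSeries.mul_inv_rev]
  have hPodd : PowerSeries.constantCoeff (R := (ZMod 2)) (Podd n) ≠ 0 := by
    rw [constantCoeff_Podd]; exact one_ne_zero
  have hcomm : Podd n * PowerSeries.X ^ (n ^ 2)
        * (((pochR (ZMod 2) n) ^ 2)⁻¹ * (Podd n)⁻¹)
      = (Podd n * (Podd n)⁻¹) * (PowerSeries.X ^ (n ^ 2) * ((pochR (ZMod 2) n) ^ 2)⁻¹) := by
    ring
  rw [hcomm, PowerSeries.mul_inv_cancel _ hPodd, one_mul]
  congr 1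
  rw [pow_two (pochR (ZMod 2) n), PowerSeries.mul_inv_rev, inv_pochK]
  rw [pow_two (mkA (ZMod 2) n)]

lemma phi6_eq : phi6 = Pser (ZMod 2) := by
  ext N
  have e1 : PowerSeries.coeff (R := (ZMod 2)) N phi6 = PowerSeries.coeff (R := (ZMod 2)) N
      (∑ n ∈ Finset.range (N+1), ((-1 : PowerSeries (ZMod 2)) ^ n *
        (∏ k ∈ Finset.range n, (1 - PowerSeries.X ^ (2 * k + 1))) *
        PowerSeries.X ^ (n ^ 2) *
        (∏ k ∈ Finset.range (2 * n), (1 + PowerSeries.X ^ (k + 1)))⁻¹)) :=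
    PowerSeries.coeff_mk _ _
  have e2 : PowerSeries.coeff (R := (ZMod 2)) N (Pser (ZMod 2)) = (pp N : ZMod 2) :=
    PowerSeries.coeff_mk _ _
  rw [e1, e2]
  simp_rw [term_eq]
  exact coeff_jacobi_sum (ZMod 2) N

lemma part2 : phi6 = (qPochInf (ZMod 2) 1)⁻¹ := by
  rw [phi6_eq]
  rw [PowerSeries.eq_inv_iff_mul_eq_one (by
    rw [constantCoeff_qPochInf]; exact one_ne_zero)]
  rw [mul_comm]
  exact qPochInf_mul_Pser _

lemma part3 (n : ℕ) : PowerSeries.coeff (R := (ZMod 2)) n phi6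
    = (Fintype.card (Nat.Partition n) : ZMod 2) := by
  rw [phi6_eq]
  exact PowerSeries.coeff_mk _ _

end Phi6Aux


/-- Jacobi's identity ∑_{n≥0} q^(n²)/((q)_n)² = 1/(q)_∞ in ℤ[[q]]; consequently
φ₆(q) ≡ 1/(q)_∞ (mod 2), i.e. c_{φ₆}(n) ≡ p(n) (mod 2). -/
theorem jacobi_identity_and_phi6_mod_two :
    jacobiQSum = PowerSeries.invOfUnit (qPochInf ℤ 1) 1 ∧
    phi6 = (qPochInf (ZMod 2) 1)⁻¹ ∧
    ∀ n : ℕ, PowerSeries.coeff (R := (ZMod 2)) n phi6 =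
      (Fintype.card (Nat.Partition n) : ZMod 2) := by
  exact ⟨Phi6Aux.part1, Phi6Aux.part2, Phi6Aux.part3⟩
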